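/- Under the linear optimal-transport path, the score of the marginal density equals minus the rescaled combination of state and velocity: for every t ∈ (0,1) and every x ∈ ℝ, the marginal density p_t is differentiable at x, p_t(x) > 0, and p_t'(x)/p_t(x) = −(x − t·u_t(x))/(1−t). -/

import Mathlib

open MeasureTheory Real

/-- Gaussian density `φ(x; m, s²) = (2πs²)^(−1/2) · exp(−(x−m)²/(2s²))`. -/
noncomputable def gauss (m s2 x : ℝ) : ℝ :=
  (Real.sqrt (2 * Real.pi * s2))⁻¹ * Real.exp (-(x - m) ^ 2 / (2 * s2))

lemma gauss_pos (m : ℝ) {s2 : ℝ} (hs2 : 0 < s2) (x : ℝ) : 0 < gauss m s2 x := by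
  unfold gauss
  positivity

lemma sqrt_le_exp {a : ℝ} (ha : 0 ≤ a) : Real.sqrt a ≤ Real.exp a := by
  rcases le_total a 1 with h | h
  · calc Real.sqrt a ≤ Real.sqrt 1 := Real.sqrt_le_sqrt h
    _ = 1 := Real.sqrt_one
    _ ≤ Real.exp a := Real.one_le_exp ha
  · calc Real.sqrt a ≤ Real.sqrt (a ^ 2) := Real.sqrt_le_sqrt (by nlinarith)
    _ = a := by rw [Real.sqrt_sq (by linarith)]
    _ ≤ Real.exp a := (Real.add_one_le_exp a).trans' (by linarith)

/-- key pointwise bound `|z| e^{-z²/(2s2)} ≤ √(2 s2)` -/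
lemma abs_mul_exp_le {s2 : ℝ} (hs2 : 0 < s2) (z : ℝ) :
    |z| * Real.exp (-z ^ 2 / (2 * s2)) ≤ Real.sqrt (2 * s2) := by
  set a := z ^ 2 / (2 * s2) with hadef
  have ha : 0 ≤ a := by positivity
  have hz : |z| = Real.sqrt (2 * s2) * Real.sqrt a := by
    rw [← Real.sqrt_mul (by positivity), ← Real.sqrt_sq_eq_abs]
    congr 1
    rw [hadef]
    field_simp
  have h1 : Real.sqrt a * Real.exp (-a) ≤ 1 := by
    have := sqrt_le_exp ha
    have hexp : Real.exp (-a) = (Real.exp a)⁻¹ := Real.exp_neg a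
    rw [hexp]
    rw [mul_inv_le_iff₀ (Real.exp_pos a), one_mul]
    exact this
  have : |z| * Real.exp (-a) = Real.sqrt (2 * s2) * (Real.sqrt a * Real.exp (-a)) := by
    rw [hz]; ring
  rw [show -z ^ 2 / (2 * s2) = -a by rw [hadef]; ring, this]
  calc Real.sqrt (2 * s2) * (Real.sqrt a * Real.exp (-a))
      ≤ Real.sqrt (2 * s2) * 1 := by
        apply mul_le_mul_of_nonneg_left h1 (Real.sqrt_nonneg _)
    _ = Real.sqrt (2 * s2) := mul_one _

lemma gauss_le (m : ℝ) {s2 : ℝ} (hs2 : 0 < s2) (x : ℝ) :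
    gauss m s2 x ≤ (Real.sqrt (2 * Real.pi * s2))⁻¹ := by
  unfold gauss
  have h1 : Real.exp (-(x - m) ^ 2 / (2 * s2)) ≤ 1 := by
    apply Real.exp_le_one_iff.2
    exact div_nonpos_of_nonpos_of_nonneg (neg_nonpos.2 (sq_nonneg _)) (by positivity)
  have h2 : (0:ℝ) ≤ (Real.sqrt (2 * Real.pi * s2))⁻¹ := by positivity
  calc (Real.sqrt (2 * Real.pi * s2))⁻¹ * Real.exp (-(x - m) ^ 2 / (2 * s2))
      ≤ (Real.sqrt (2 * Real.pi * s2))⁻¹ * 1 := by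
        apply mul_le_mul_of_nonneg_left h1 h2
    _ = _ := mul_one _

lemma hasDerivAt_gauss (m : ℝ) {s2 : ℝ} (hs2 : 0 < s2) (x : ℝ) :
    HasDerivAt (fun x => gauss m s2 x) (-(x - m) / s2 * gauss m s2 x) x := by
  have h : HasDerivAt (fun x : ℝ => -(x - m) ^ 2 / (2 * s2))
      (-(2 * (x - m)) / (2 * s2)) x := by
    have h1 : HasDerivAt (fun x : ℝ => (x - m) ^ 2) (2 * (x - m)) x := by
      have := ((hasDerivAt_id x).sub_const m).pow 2
      simpa [Pi.pow_def] using this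
    have := (h1.neg).div_const (2 * s2)
    simpa using this
  have h2 := (h.exp).const_mul (Real.sqrt (2 * Real.pi * s2))⁻¹
  have heq : (Real.sqrt (2 * Real.pi * s2))⁻¹ *
      (Real.exp (-(x - m) ^ 2 / (2 * s2)) * (-(2 * (x - m)) / (2 * s2))) =
      -(x - m) / s2 * gauss m s2 x := by
    unfold gauss
    field_simp
  rw [heq] at h2
  exact h2

lemma continuous_gauss_y (t s2 x : ℝ) : Continuous (fun y => gauss (t * y) s2 x) := by
  unfold gauss
  fun_prop

/-- **Score–velocity relation under the linear OT path.**
For every `t ∈ (0,1)` and every `x ∈ ℝ`, the marginal density `p_t` is differentiable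
at `x`, `p_t x > 0`, and `p_t'(x)/p_t(x) = −(x − t·u_t(x))/(1−t)`. -/
theorem score_velocity_linear_OT
    (t : ℝ) (ht : t ∈ Set.Ioo (0 : ℝ) 1)
    (μ : Measure ℝ) [IsProbabilityMeasure μ]
    (p m u : ℝ → ℝ)
    (hp : ∀ x, p x = ∫ y, gauss (t * y) ((1 - t) ^ 2) x ∂μ)
    (hm : ∀ x, m x = (p x)⁻¹ * ∫ y, y * gauss (t * y) ((1 - t) ^ 2) x ∂μ)
    (hu : ∀ x, u x = (m x - x) / (1 - t)) :
    ∀ x : ℝ, DifferentiableAt ℝ p x ∧ 0 < p x ∧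
      deriv p x / p x = -(x - t * u x) / (1 - t) := by
  obtain ⟨ht0, ht1⟩ := ht
  set s2 : ℝ := (1 - t) ^ 2 with hs2def
  have h1t : 0 < 1 - t := by linarith
  have hs2 : 0 < s2 := by rw [hs2def]; positivity
  have ht1' : (1 : ℝ) - t ≠ 0 := by linarith
  intro x₀
  -- integrability of gauss in y, at any x
  have hint : ∀ x : ℝ, Integrable (fun y => gauss (t * y) s2 x) μ := by
    intro x
    apply Integrable.mono' (integrable_const ((Real.sqrt (2 * Real.pi * s2))⁻¹))
      ((continuous_gauss_y t s2 x).aestronglyMeasurable)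
    filter_upwards with y
    rw [Real.norm_eq_abs, abs_of_pos (gauss_pos _ hs2 x)]
    exact gauss_le _ hs2 x
  -- positivity of p
  have hppos : ∀ x : ℝ, 0 < p x := by
    intro x
    rw [hp x]
    apply (integral_pos_iff_support_of_nonneg (fun y => (gauss_pos (t*y) hs2 x).le)
      (hint x)).2
    have : Function.support (fun y => gauss (t * y) s2 x) = Set.univ := by
      ext y; simp [Function.mem_support, (gauss_pos (t*y) hs2 x).ne']
    rw [this]
    simp
  -- differentiation under the integral sign
  set F : ℝ → ℝ → ℝ := fun x y => gauss (t * y) s2 x with hF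
  set F' : ℝ → ℝ → ℝ := fun x y => -(x - t * y) / s2 * gauss (t * y) s2 x with hF'
  set bound : ℝ → ℝ := fun _ => (Real.sqrt (2 * Real.pi * s2))⁻¹ / s2 * Real.sqrt (2 * s2)
    with hbound
  have key : Integrable (F' x₀) μ ∧
      HasDerivAt (fun x => ∫ y, F x y ∂μ) (∫ y, F' x₀ y ∂μ) x₀ := by
    apply hasDerivAt_integral_of_dominated_loc_of_deriv_le (bound := bound) (s := Metric.ball x₀ 1) (Metric.ball_mem_nhds x₀ one_pos)
    · filter_upwards with x
      exact (continuous_gauss_y t s2 x).aestronglyMeasurable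
    · exact hint x₀
    · have : Continuous (F' x₀) := by
        apply Continuous.mul
        · fun_prop
        · exact continuous_gauss_y t s2 x₀
      exact this.aestronglyMeasurable
    · filter_upwards with y
      intro x _
      rw [hF']
      simp only [Real.norm_eq_abs]
      rw [hbound]
      have hg : gauss (t * y) s2 x =
          (Real.sqrt (2 * Real.pi * s2))⁻¹ * Real.exp (-(x - t * y) ^ 2 / (2 * s2)) := rfl
      rw [abs_mul, hg, abs_mul]
      have h1 : |(-(x - t * y) / s2)| = |x - t * y| / s2 := by
        rw [abs_div, abs_neg, abs_of_pos hs2]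
      have h2 : |(Real.sqrt (2 * Real.pi * s2))⁻¹| = (Real.sqrt (2 * Real.pi * s2))⁻¹ := by
        rw [abs_of_pos]; positivity
      have h3 : |Real.exp (-(x - t * y) ^ 2 / (2 * s2))| =
          Real.exp (-(x - t * y) ^ 2 / (2 * s2)) := abs_of_pos (Real.exp_pos _)
      rw [h1, h2, h3]
      have := abs_mul_exp_le hs2 (x - t * y)
      calc |x - t * y| / s2 * ((Real.sqrt (2 * Real.pi * s2))⁻¹ *
            Real.exp (-(x - t * y) ^ 2 / (2 * s2)))
          = (Real.sqrt (2 * Real.pi * s2))⁻¹ / s2 *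
            (|x - t * y| * Real.exp (-(x - t * y) ^ 2 / (2 * s2))) := by ring
        _ ≤ (Real.sqrt (2 * Real.pi * s2))⁻¹ / s2 * Real.sqrt (2 * s2) := by
            apply mul_le_mul_of_nonneg_left this (by positivity)
    · exact integrable_const _
    · filter_upwards with y
      intro x _
      exact hasDerivAt_gauss (t * y) hs2 x
  obtain ⟨hF'int, hderiv⟩ := key
  have hpfun : p = fun x => ∫ y, F x y ∂μ := funext hp
  have hpd : HasDerivAt p (∫ y, F' x₀ y ∂μ) x₀ := by rw [hpfun]; exact hderiv
  refine ⟨hpd.differentiableAt, hppos x₀, ?_⟩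
  rw [hpd.deriv]
  -- split the integral of F'
  have hsplit : (fun y => F' x₀ y) =
      fun y => (t / s2) * (y * gauss (t * y) s2 x₀) + (-(x₀) / s2) * gauss (t * y) s2 x₀ := by
    funext y
    rw [hF']
    field_simp
    ring
  -- integrability of y * gauss
  have hyint : Integrable (fun y => y * gauss (t * y) s2 x₀) μ := by
    have : (fun y => y * gauss (t * y) s2 x₀) =
        fun y => (s2 / t) * F' x₀ y + (x₀ / t) * gauss (t * y) s2 x₀ := by
      funext y
      rw [hF']
      field_simp
      ring
    rw [this]
    exact ((hF'int.const_mul _).add ((hint x₀).const_mul _))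
  have hintval : ∫ y, F' x₀ y ∂μ =
      (t / s2) * (∫ y, y * gauss (t * y) s2 x₀ ∂μ) + (-(x₀) / s2) * p x₀ := by
    rw [hp x₀]
    rw [hsplit]
    rw [integral_add (hyint.const_mul _) ((hint x₀).const_mul _),
      integral_const_mul, integral_const_mul]
  rw [hintval]
  have hmval : ∫ y, y * gauss (t * y) s2 x₀ ∂μ = m x₀ * p x₀ := by
    rw [hm x₀]
    field_simp [(hppos x₀).ne']
    congr 1; ext y; rw [mul_comm y t]
  rw [hmval, hu x₀]
  have hpne := (hppos x₀).ne'
  have hs2ne := hs2.ne'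
  field_simp
  ring
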